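/- Uniqueness of solutions of the game Riccati equation: Let A, C, B, D, Q, R be bounded measurable matrix-valued functions on [0,T] with Q(s) and R(s) symmetric, and G a symmetric n×n matrix. Suppose P, P̄ : [0,T] → 𝕊ⁿ are absolutely continuous, satisfy Ṗ + PA + AᵀP + CᵀPC + Q − (PB + CᵀPD)(R + DᵀPD)⁻¹(BᵀP + DᵀPC) = 0 a.e. with P(T) = G = P̄(T), and both R + DᵀPD and R + DᵀP̄D are invertible with essentially bounded inverses. Then P = P̄ on [0,T]. -/

import Mathlib

open Matrix MeasureTheory intervalIntegral

attribute [local instance] Matrix.normedAddCommGroup Matrix.normedSpace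

/-- The Riccati right-hand side `F(P)(s)` of the game Riccati equation. -/
noncomputable def riccatiRHS {n m : ℕ}
    (A C : ℝ → Matrix (Fin n) (Fin n) ℝ) (B D : ℝ → Matrix (Fin n) (Fin m) ℝ)
    (Q : ℝ → Matrix (Fin n) (Fin n) ℝ) (R : ℝ → Matrix (Fin m) (Fin m) ℝ)
    (P : ℝ → Matrix (Fin n) (Fin n) ℝ) (s : ℝ) : Matrix (Fin n) (Fin n) ℝ :=
  P s * A s + (A s)ᵀ * P s + (C s)ᵀ * P s * C s + Q s
    - (P s * B s + (C s)ᵀ * P s * D s) * (R s + (D s)ᵀ * P s * D s)⁻¹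
        * ((B s)ᵀ * P s + (D s)ᵀ * P s * C s)

private lemma matMul_norm_le {a b c : ℕ} {X : Matrix (Fin a) (Fin b) ℝ}
    {Y : Matrix (Fin b) (Fin c) ℝ} {x y : ℝ} (hx : ‖X‖ ≤ x) (hy : ‖Y‖ ≤ y) :
    ‖X * Y‖ ≤ b * x * y := by
  have hx0 : (0:ℝ) ≤ x := (norm_nonneg X).trans hx
  have hy0 : (0:ℝ) ≤ y := (norm_nonneg Y).trans hy
  rw [Matrix.norm_le_iff (by exact mul_nonneg (mul_nonneg (Nat.cast_nonneg b) hx0) hy0)]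
  intro i j
  calc ‖(X * Y) i j‖ = ‖∑ k, X i k * Y k j‖ := by rw [Matrix.mul_apply]
    _ ≤ ∑ k, ‖X i k * Y k j‖ := norm_sum_le _ _
    _ ≤ ∑ _k : Fin b, x * y := by
        refine Finset.sum_le_sum fun k _ => ?_
        rw [norm_mul]
        exact mul_le_mul ((Matrix.norm_entry_le_entrywise_sup_norm X).trans hx)
          ((Matrix.norm_entry_le_entrywise_sup_norm Y).trans hy) (norm_nonneg _) hx0
    _ = b * x * y := by
        simp [Finset.sum_const, Fintype.card_fin, mul_assoc]

/-- Uniqueness of solutions of the game Riccati equation (Theorem 5.3, uniqueness part). -/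
theorem stmt_11 {n m : ℕ} (T : ℝ) (hT : 0 < T)
    (A C : ℝ → Matrix (Fin n) (Fin n) ℝ) (B D : ℝ → Matrix (Fin n) (Fin m) ℝ)
    (Q : ℝ → Matrix (Fin n) (Fin n) ℝ) (R : ℝ → Matrix (Fin m) (Fin m) ℝ)
    (G : Matrix (Fin n) (Fin n) ℝ) (hG : G.IsSymm)
    (hQ : ∀ s, (Q s).IsSymm) (hR : ∀ s, (R s).IsSymm)
    (hmeas : (∀ i j, Measurable fun s => A s i j) ∧ (∀ i j, Measurable fun s => B s i j) ∧
        (∀ i j, Measurable fun s => C s i j) ∧ (∀ i j, Measurable fun s => D s i j) ∧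
        (∀ i j, Measurable fun s => Q s i j) ∧ (∀ i j, Measurable fun s => R s i j))
    (hbd : ∃ M : ℝ, ∀ s ∈ Set.Icc 0 T,
        ‖A s‖ ≤ M ∧ ‖B s‖ ≤ M ∧ ‖C s‖ ≤ M ∧ ‖D s‖ ≤ M ∧ ‖Q s‖ ≤ M ∧ ‖R s‖ ≤ M)
    (P Pbar : ℝ → Matrix (Fin n) (Fin n) ℝ)
    (hPsymm : ∀ s, (P s).IsSymm) (hPbarsymm : ∀ s, (Pbar s).IsSymm)
    -- absolute continuity + satisfying the Riccati ODE a.e., in integral form: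
    (hPeq : ∀ t ∈ Set.Icc 0 T, P t = G + ∫ s in t..T, riccatiRHS A C B D Q R P s)
    (hPbareq : ∀ t ∈ Set.Icc 0 T, Pbar t = G + ∫ s in t..T, riccatiRHS A C B D Q R Pbar s)
    (hPint : @IntervalIntegrable _ _ NormedAddGroup.toENormedAddMonoid (riccatiRHS A C B D Q R P) volume 0 T)
    (hPbarint : @IntervalIntegrable _ _ NormedAddGroup.toENormedAddMonoid (riccatiRHS A C B D Q R Pbar) volume 0 T)
    (hPinv : ∀ s ∈ Set.Icc 0 T, IsUnit (R s + (D s)ᵀ * P s * D s))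
    (hPbarinv : ∀ s ∈ Set.Icc 0 T, IsUnit (R s + (D s)ᵀ * Pbar s * D s))
    (hPinvbd : ∃ M : ℝ, ∀ s ∈ Set.Icc 0 T, ‖(R s + (D s)ᵀ * P s * D s)⁻¹‖ ≤ M)
    (hPbarinvbd : ∃ M : ℝ, ∀ s ∈ Set.Icc 0 T, ‖(R s + (D s)ᵀ * Pbar s * D s)⁻¹‖ ≤ M) :
    ∀ t ∈ Set.Icc 0 T, P t = Pbar t := by
  letI : ENormedAddMonoid (Matrix (Fin n) (Fin n) ℝ) := NormedAddGroup.toENormedAddMonoid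
  letI : TopologicalSpace.PseudoMetrizableSpace (Matrix (Fin n) (Fin n) ℝ) :=
    PseudoEMetricSpace.pseudoMetrizableSpace
  set f := riccatiRHS A C B D Q R P with hf
  set fb := riccatiRHS A C B D Q R Pbar with hfb
  obtain ⟨M0, hM0⟩ := hbd
  obtain ⟨MU0, hMU0⟩ := hPinvbd
  obtain ⟨MUb0, hMUb0⟩ := hPbarinvbd
  -- subinterval integrability
  have huIcc : ∀ t ∈ Set.Icc (0:ℝ) T, Set.uIcc 0 t ⊆ Set.uIcc 0 T := by
    intro t ht
    apply Set.uIcc_subset_uIcc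
    · simp
    · rw [Set.uIcc_of_le hT.le]; exact ht
  have huIcc2 : ∀ t ∈ Set.Icc (0:ℝ) T, Set.uIcc t T ⊆ Set.uIcc 0 T := by
    intro t ht
    apply Set.uIcc_subset_uIcc
    · rw [Set.uIcc_of_le hT.le]; exact ht
    · simp [hT.le]
  -- continuity of P and Pbar on [0, T]
  have hcont : ∀ (W : ℝ → Matrix (Fin n) (Fin n) ℝ) (g : ℝ → Matrix (Fin n) (Fin n) ℝ),
      IntervalIntegrable g volume 0 T →
      (∀ t ∈ Set.Icc (0:ℝ) T, W t = G + ∫ s in t..T, g s) →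
      ContinuousOn W (Set.Icc 0 T) := by
    intro W g hgint hWeq
    have h1 : ContinuousOn (fun t => ∫ s in (0:ℝ)..t, g s) (Set.Icc 0 T) := by
      have h2 : IntegrableOn g (Set.uIcc 0 T) volume := by
        rw [Set.uIcc_of_le hT.le]
        exact (intervalIntegrable_iff_integrableOn_Icc_of_le hT.le).mp hgint
      have := intervalIntegral.continuousOn_primitive_interval (a := (0:ℝ)) (b := T)
        (f := g) (μ := volume) h2
      rwa [Set.uIcc_of_le hT.le] at this
    have heq : ∀ t ∈ Set.Icc (0:ℝ) T,
        W t = G + ((∫ s in (0:ℝ)..T, g s) - ∫ s in (0:ℝ)..t, g s) := by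
      intro t ht
      rw [hWeq t ht, intervalIntegral.integral_interval_sub_left hgint
        (hgint.mono_set (huIcc t ht))]
    exact (continuousOn_const.add (continuousOn_const.sub h1)).congr heq
  have hPconti : ContinuousOn P (Set.Icc 0 T) := hcont P f hPint hPeq
  have hPbarconti : ContinuousOn Pbar (Set.Icc 0 T) := hcont Pbar fb hPbarint hPbareq
  have hΔcont : ContinuousOn (fun s => P s - Pbar s) (Set.Icc 0 T) := hPconti.sub hPbarconti
  obtain ⟨MP, hMP⟩ := isCompact_Icc.exists_bound_of_continuousOn hPconti
  obtain ⟨MPb, hMPb⟩ := isCompact_Icc.exists_bound_of_continuousOn hPbarconti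
  -- the Lipschitz-type estimate
  obtain ⟨L0, hLip⟩ : ∃ L : ℝ, ∀ s ∈ Set.Icc (0:ℝ) T,
      ‖f s - fb s‖ ≤ L * ‖P s - Pbar s‖ := by
    refine ⟨((n:ℝ)*1*M0 + (n:ℝ)*M0*1 + (n:ℝ)*((n:ℝ)*M0*1)*M0)
      + ((m:ℝ) * ((m:ℝ) * ((n:ℝ)*1*M0 + (n:ℝ)*((n:ℝ)*M0*1)*M0) * MU0)
            * ((n:ℝ)*M0*MP + (n:ℝ)*((n:ℝ)*M0*MP)*M0)
        + (m:ℝ) * ((m:ℝ) * ((n:ℝ)*MPb*M0 + (n:ℝ)*((n:ℝ)*M0*MPb)*M0)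
            * ((m:ℝ)*((m:ℝ)*MU0*((n:ℝ)*((n:ℝ)*M0*1)*M0))*MUb0))
            * ((n:ℝ)*M0*MP + (n:ℝ)*((n:ℝ)*M0*MP)*M0)
        + (m:ℝ) * ((m:ℝ) * ((n:ℝ)*MPb*M0 + (n:ℝ)*((n:ℝ)*M0*MPb)*M0) * MUb0)
            * ((n:ℝ)*M0*1 + (n:ℝ)*((n:ℝ)*M0*1)*M0)), fun s hs => ?_⟩
    obtain ⟨ha, hb, hc, hd, hq, hr⟩ := hM0 s hs
    have hU := hMU0 s hs
    have hUb := hMUb0 s hs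
    have hp := hMP s hs
    have hpb := hMPb s hs
    have hdetS := (Matrix.isUnit_iff_isUnit_det _).mp (hPinv s hs)
    have hdetSb := (Matrix.isUnit_iff_isUnit_det _).mp (hPbarinv s hs)
    set p := P s with hpd
    set pb := Pbar s with hpbd
    set a := A s with haD
    set b := B s with hbD
    set c := C s with hcD
    set d := D s with hdD
    set q := Q s with hqD
    set r := R s with hrD
    set δ := p - pb with hδd
    set S := r + dᵀ * p * d with hSd
    set Sb := r + dᵀ * pb * d with hSbd
    set Y := bᵀ * p + dᵀ * p * c with hYd
    set Xb := pb * b + cᵀ * pb * d with hXbd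
    have haT : ‖aᵀ‖ ≤ M0 := by rw [norm_transpose]; exact ha
    have hbT : ‖bᵀ‖ ≤ M0 := by rw [norm_transpose]; exact hb
    have hcT : ‖cᵀ‖ ≤ M0 := by rw [norm_transpose]; exact hc
    have hdT : ‖dᵀ‖ ≤ M0 := by rw [norm_transpose]; exact hd
    clear_value p pb a b c d q r δ S Sb Y Xb
    have key : S⁻¹ - Sb⁻¹ = S⁻¹ * (Sb - S) * Sb⁻¹ := by
      have h1 : S⁻¹ * S = 1 := Matrix.nonsing_inv_mul S hdetS
      have h2 : Sb * Sb⁻¹ = 1 := Matrix.mul_nonsing_inv Sb hdetSb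
      calc S⁻¹ - Sb⁻¹ = S⁻¹ * (Sb * Sb⁻¹) - (S⁻¹ * S) * Sb⁻¹ := by
            rw [h1, h2, mul_one, one_mul]
        _ = S⁻¹ * (Sb - S) * Sb⁻¹ := by noncomm_ring
    have hid : f s - fb s =
        δ * a + aᵀ * δ + cᵀ * δ * c
          - ((δ * b + cᵀ * δ * d) * S⁻¹ * Y + Xb * (S⁻¹ * (Sb - S) * Sb⁻¹) * Y
              + Xb * Sb⁻¹ * (bᵀ * δ + dᵀ * δ * c)) := by
      rw [hf, hfb]
      simp only [riccatiRHS]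
      simp only [← hpd, ← hpbd, ← haD, ← hbD, ← hcD, ← hdD, ← hqD, ← hrD]
      simp only [← hSd, ← hSbd]
      rw [← key]
      simp only [hδd, hYd, hXbd]
      generalize S⁻¹ = u
      generalize Sb⁻¹ = v
      simp only [Matrix.add_mul, Matrix.mul_add, Matrix.sub_mul, Matrix.mul_sub]
      abel
    have hSbSeq : Sb - S = dᵀ * (pb - p) * d := by
      rw [hSd, hSbd]
      simp only [Matrix.add_mul, Matrix.mul_add, Matrix.sub_mul, Matrix.mul_sub]
      abel
    have hδrev : ‖pb - p‖ ≤ ‖δ‖ := by rw [norm_sub_rev, ← hδd]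
    have hE1 : ‖δ * a‖ ≤ (n:ℝ) * ‖δ‖ * M0 := matMul_norm_le le_rfl ha
    have hE2 : ‖aᵀ * δ‖ ≤ (n:ℝ) * M0 * ‖δ‖ := matMul_norm_le haT le_rfl
    have hE3 : ‖cᵀ * δ * c‖ ≤ (n:ℝ) * ((n:ℝ) * M0 * ‖δ‖) * M0 :=
      matMul_norm_le (matMul_norm_le hcT le_rfl) hc
    have hY : ‖Y‖ ≤ (n:ℝ)*M0*MP + (n:ℝ)*((n:ℝ)*M0*MP)*M0 := by
      rw [hYd]
      exact (norm_add_le _ _).trans (add_le_add (matMul_norm_le hbT hp)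
        (matMul_norm_le (matMul_norm_le hdT hp) hc))
    have hXb : ‖Xb‖ ≤ (n:ℝ)*MPb*M0 + (n:ℝ)*((n:ℝ)*M0*MPb)*M0 := by
      rw [hXbd]
      exact (norm_add_le _ _).trans (add_le_add (matMul_norm_le hpb hb)
        (matMul_norm_le (matMul_norm_le hcT hpb) hd))
    have hδX : ‖δ * b + cᵀ * δ * d‖ ≤ (n:ℝ)*‖δ‖*M0 + (n:ℝ)*((n:ℝ)*M0*‖δ‖)*M0 :=
      (norm_add_le _ _).trans (add_le_add (matMul_norm_le le_rfl hb)
        (matMul_norm_le (matMul_norm_le hcT le_rfl) hd))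
    have hδY : ‖bᵀ * δ + dᵀ * δ * c‖ ≤ (n:ℝ)*M0*‖δ‖ + (n:ℝ)*((n:ℝ)*M0*‖δ‖)*M0 :=
      (norm_add_le _ _).trans (add_le_add (matMul_norm_le hbT le_rfl)
        (matMul_norm_le (matMul_norm_le hdT le_rfl) hc))
    have hSbS : ‖Sb - S‖ ≤ (n:ℝ)*((n:ℝ)*M0*‖δ‖)*M0 := by
      rw [hSbSeq]
      exact matMul_norm_le (matMul_norm_le hdT hδrev) hd
    have hmid : ‖S⁻¹ * (Sb - S) * Sb⁻¹‖ ≤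
        (m:ℝ)*((m:ℝ)*MU0*((n:ℝ)*((n:ℝ)*M0*‖δ‖)*M0))*MUb0 :=
      matMul_norm_le (matMul_norm_le hU hSbS) hUb
    have hT1 : ‖(δ * b + cᵀ * δ * d) * S⁻¹ * Y‖ ≤
        (m:ℝ) * ((m:ℝ) * ((n:ℝ)*‖δ‖*M0 + (n:ℝ)*((n:ℝ)*M0*‖δ‖)*M0) * MU0)
          * ((n:ℝ)*M0*MP + (n:ℝ)*((n:ℝ)*M0*MP)*M0) :=
      matMul_norm_le (matMul_norm_le hδX hU) hY
    have hT2 : ‖Xb * (S⁻¹ * (Sb - S) * Sb⁻¹) * Y‖ ≤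
        (m:ℝ) * ((m:ℝ) * ((n:ℝ)*MPb*M0 + (n:ℝ)*((n:ℝ)*M0*MPb)*M0)
            * ((m:ℝ)*((m:ℝ)*MU0*((n:ℝ)*((n:ℝ)*M0*‖δ‖)*M0))*MUb0))
          * ((n:ℝ)*M0*MP + (n:ℝ)*((n:ℝ)*M0*MP)*M0) :=
      matMul_norm_le (matMul_norm_le hXb hmid) hY
    have hT3 : ‖Xb * Sb⁻¹ * (bᵀ * δ + dᵀ * δ * c)‖ ≤
        (m:ℝ) * ((m:ℝ) * ((n:ℝ)*MPb*M0 + (n:ℝ)*((n:ℝ)*M0*MPb)*M0) * MUb0)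
          * ((n:ℝ)*M0*‖δ‖ + (n:ℝ)*((n:ℝ)*M0*‖δ‖)*M0) :=
      matMul_norm_le (matMul_norm_le hXb hUb) hδY
    calc ‖f s - fb s‖
        ≤ ‖δ * a + aᵀ * δ + cᵀ * δ * c‖
          + ‖(δ * b + cᵀ * δ * d) * S⁻¹ * Y + Xb * (S⁻¹ * (Sb - S) * Sb⁻¹) * Y
              + Xb * Sb⁻¹ * (bᵀ * δ + dᵀ * δ * c)‖ := by rw [hid]; exact norm_sub_le _ _
      _ ≤ (‖δ * a‖ + ‖aᵀ * δ‖ + ‖cᵀ * δ * c‖)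
          + (‖(δ * b + cᵀ * δ * d) * S⁻¹ * Y‖ + ‖Xb * (S⁻¹ * (Sb - S) * Sb⁻¹) * Y‖
              + ‖Xb * Sb⁻¹ * (bᵀ * δ + dᵀ * δ * c)‖) :=
          add_le_add (norm_add₃_le) (norm_add₃_le)
      _ ≤ ((n:ℝ) * ‖δ‖ * M0 + (n:ℝ) * M0 * ‖δ‖ + (n:ℝ) * ((n:ℝ) * M0 * ‖δ‖) * M0)
          + ((m:ℝ) * ((m:ℝ) * ((n:ℝ)*‖δ‖*M0 + (n:ℝ)*((n:ℝ)*M0*‖δ‖)*M0) * MU0)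
                * ((n:ℝ)*M0*MP + (n:ℝ)*((n:ℝ)*M0*MP)*M0)
            + (m:ℝ) * ((m:ℝ) * ((n:ℝ)*MPb*M0 + (n:ℝ)*((n:ℝ)*M0*MPb)*M0)
                * ((m:ℝ)*((m:ℝ)*MU0*((n:ℝ)*((n:ℝ)*M0*‖δ‖)*M0))*MUb0))
                * ((n:ℝ)*M0*MP + (n:ℝ)*((n:ℝ)*M0*MP)*M0)
            + (m:ℝ) * ((m:ℝ) * ((n:ℝ)*MPb*M0 + (n:ℝ)*((n:ℝ)*M0*MPb)*M0) * MUb0)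
                * ((n:ℝ)*M0*‖δ‖ + (n:ℝ)*((n:ℝ)*M0*‖δ‖)*M0)) :=
          add_le_add (add_le_add (add_le_add hE1 hE2) hE3)
            (add_le_add (add_le_add hT1 hT2) hT3)
      _ = (((n:ℝ)*1*M0 + (n:ℝ)*M0*1 + (n:ℝ)*((n:ℝ)*M0*1)*M0)
          + ((m:ℝ) * ((m:ℝ) * ((n:ℝ)*1*M0 + (n:ℝ)*((n:ℝ)*M0*1)*M0) * MU0)
                * ((n:ℝ)*M0*MP + (n:ℝ)*((n:ℝ)*M0*MP)*M0)
            + (m:ℝ) * ((m:ℝ) * ((n:ℝ)*MPb*M0 + (n:ℝ)*((n:ℝ)*M0*MPb)*M0)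
                * ((m:ℝ)*((m:ℝ)*MU0*((n:ℝ)*((n:ℝ)*M0*1)*M0))*MUb0))
                * ((n:ℝ)*M0*MP + (n:ℝ)*((n:ℝ)*M0*MP)*M0)
            + (m:ℝ) * ((m:ℝ) * ((n:ℝ)*MPb*M0 + (n:ℝ)*((n:ℝ)*M0*MPb)*M0) * MUb0)
                * ((n:ℝ)*M0*1 + (n:ℝ)*((n:ℝ)*M0*1)*M0))) * ‖δ‖ := by ring
  -- make the Lipschitz constant nonnegative
  set L : ℝ := max L0 0 with hLdef
  have hL0 : (0:ℝ) ≤ L := le_max_right _ _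
  have hLip' : ∀ s ∈ Set.Icc (0:ℝ) T, ‖f s - fb s‖ ≤ L * ‖P s - Pbar s‖ := fun s hs =>
    (hLip s hs).trans (mul_le_mul_of_nonneg_right (le_max_left _ _) (norm_nonneg _))
  -- integral equation for the difference
  have hhint : IntervalIntegrable (fun s => f s - fb s) volume 0 T := hPint.sub hPbarint
  have hΔeq : ∀ t ∈ Set.Icc (0:ℝ) T, P t - Pbar t = ∫ s in t..T, (f s - fb s) := by
    intro t ht
    have h1 : IntervalIntegrable f volume t T := hPint.mono_set (huIcc2 t ht)
    have h2 : IntervalIntegrable fb volume t T := hPbarint.mono_set (huIcc2 t ht)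
    rw [hPeq t ht, hPbareq t ht, intervalIntegral.integral_sub h1 h2]
    abel
  obtain ⟨Mg0, hMg0⟩ := isCompact_Icc.exists_bound_of_continuousOn hΔcont
  set Mg : ℝ := max Mg0 0 with hMgdef
  have hMg : ∀ s ∈ Set.Icc (0:ℝ) T, ‖P s - Pbar s‖ ≤ Mg := fun s hs =>
    (hMg0 s hs).trans (le_max_left _ _)
  -- Gronwall iteration
  have key : ∀ k : ℕ, ∀ t ∈ Set.Icc (0:ℝ) T,
      ‖P t - Pbar t‖ ≤ Mg * (L * (T - t)) ^ k / (Nat.factorial k) := by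
    intro k
    induction k with
    | zero => intro t ht; simpa using hMg t ht
    | succ k ih =>
      intro t ht
      have htT : t ≤ T := ht.2
      have hIccsub : Set.Icc t T ⊆ Set.Icc 0 T := Set.Icc_subset_Icc ht.1 le_rfl
      have huI : Set.uIcc t T ⊆ Set.uIcc 0 T := huIcc2 t ht
      have hInt1 : IntervalIntegrable (fun s => ‖f s - fb s‖) volume t T :=
        (hhint.mono_set huI).norm
      have hgc : ContinuousOn (fun s => L * ‖P s - Pbar s‖) (Set.uIcc t T) := by
        rw [Set.uIcc_of_le htT]
        exact continuousOn_const.mul ((hΔcont.mono hIccsub).norm)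
      have hgint : IntervalIntegrable (fun s => L * ‖P s - Pbar s‖) volume t T :=
        hgc.intervalIntegrable
      have hbint : IntervalIntegrable
          (fun s => L * (Mg * (L * (T - s)) ^ k / (Nat.factorial k))) volume t T := by
        apply Continuous.intervalIntegrable
        exact continuous_const.mul ((continuous_const.mul
          ((continuous_const.mul (continuous_const.sub continuous_id)).pow k)).div_const _)
      have hIk : (∫ s in t..T, (T - s) ^ k) = (T - t) ^ (k + 1) / ((k:ℝ) + 1) := by
        have h := intervalIntegral.integral_comp_sub_left (a := t) (b := T)
          (fun x => x ^ k) T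
        rw [h, integral_pow]
        simp
      have hfac : ((Nat.factorial k : ℝ)) ≠ 0 := by
        exact_mod_cast Nat.factorial_ne_zero k
      calc ‖P t - Pbar t‖ = ‖∫ s in t..T, (f s - fb s)‖ := by rw [hΔeq t ht]
        _ ≤ ∫ s in t..T, ‖f s - fb s‖ :=
            intervalIntegral.norm_integral_le_integral_norm htT
        _ ≤ ∫ s in t..T, L * ‖P s - Pbar s‖ :=
            intervalIntegral.integral_mono_on htT hInt1 hgint
              (fun x hx => hLip' x (hIccsub hx))
        _ ≤ ∫ s in t..T, L * (Mg * (L * (T - s)) ^ k / (Nat.factorial k)) :=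
            intervalIntegral.integral_mono_on htT hgint hbint
              (fun x hx => mul_le_mul_of_nonneg_left (ih x (hIccsub hx)) hL0)
        _ = (L * Mg * L ^ k / (Nat.factorial k)) * ∫ s in t..T, (T - s) ^ k := by
            rw [← intervalIntegral.integral_const_mul]
            apply intervalIntegral.integral_congr
            intro s _
            simp only [mul_pow]
            ring
        _ = (L * Mg * L ^ k / (Nat.factorial k)) * ((T - t) ^ (k + 1) / ((k:ℝ) + 1)) := by
            rw [hIk]
        _ = Mg * (L * (T - t)) ^ (k + 1) / (Nat.factorial (k + 1)) := by
            rw [Nat.factorial_succ]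
            push_cast
            simp only [mul_pow]
            field_simp
            ring
  -- conclude
  intro t ht
  have htend : Filter.Tendsto (fun k : ℕ => Mg * (L * (T - t)) ^ k / (Nat.factorial k))
      Filter.atTop (nhds 0) := by
    have h := (FloorSemiring.tendsto_pow_div_factorial_atTop (K := ℝ) (L * (T - t))).const_mul Mg
    simpa [mul_div_assoc] using h
  have h0 : ‖P t - Pbar t‖ ≤ 0 := ge_of_tendsto' htend (fun k => key k t ht)
  have h1 : ‖P t - Pbar t‖ = 0 := le_antisymm h0 (norm_nonneg _)
  rw [norm_eq_zero, sub_eq_zero] at h1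
  exact h1
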